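/- Let V be a finite type with exactly n elements and let F be a finite formula over V all of whose clauses are non-tautology clauses. If the number of clauses in F is strictly greater than 3^n − 2^n, then F is unsatisfiable. -/

import Mathlib

def ClauseTrue {V : Type*} (σ : V → Bool) (C : Finset (V × Bool)) : Prop :=
  ∃ l ∈ C, σ l.1 = l.2

def ClauseFalse {V : Type*} (σ : V → Bool) (C : Finset (V × Bool)) : Prop :=
  ∀ l ∈ C, σ l.1 ≠ l.2

def NonTaut {V : Type*} (C : Finset (V × Bool)) : Prop :=
  ∀ x : V, ¬((x, true) ∈ C ∧ (x, false) ∈ C)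

def FullyPopulatedOver {V : Type*} (C : Finset (V × Bool)) (W : Finset V) : Prop :=
  (∀ x ∈ W, Xor' ((x, true) ∈ C) ((x, false) ∈ C)) ∧ ∀ l ∈ C, l.1 ∈ W

def FullyPopulated {V : Type*} [Fintype V] (C : Finset (V × Bool)) : Prop :=
  ∀ x : V, Xor' ((x, true) ∈ C) ((x, false) ∈ C)

theorem stmt_15 {V : Type*} [Fintype V] (n : ℕ) (hn : Fintype.card V = n)
    (F : Finset (Finset (V × Bool))) (hNT : ∀ C ∈ F, NonTaut C)
    (hcard : F.card > 3 ^ n - 2 ^ n) :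
    ¬ ∃ σ : V → Bool, ∀ C ∈ F, ClauseTrue σ C := by
  classical
  rintro ⟨σ, hσ⟩
  set Φ : Finset (V × Bool) → (V → Option Bool) := fun C x =>
    if (x, true) ∈ C then some true else if (x, false) ∈ C then some false else none with hΦ
  have hmem : ∀ C ∈ F, ∀ x b, ((x, b) ∈ C ↔ Φ C x = some b) := by
    intro C hC x b
    have hnt := hNT C hC x
    cases b <;> simp only [hΦ] <;> split_ifs with h1 h2 <;> simp_all
  -- the target set: functions hitting σ somewhere
  set T : Finset (V → Option Bool) :=
    Finset.univ.filter (fun f => ∃ x, f x = some (σ x)) with hT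
  have hmaps : ∀ C ∈ F, Φ C ∈ T := by
    intro C hC
    obtain ⟨l, hl, hσl⟩ := hσ C hC
    simp only [hT, Finset.mem_filter, Finset.mem_univ, true_and]
    exact ⟨l.1, by rw [← (hmem C hC l.1 (σ l.1)).mp (by rw [hσl]; exact hl)]⟩
  have hinj : Set.InjOn Φ F := by
    intro C hC C' hC' h
    ext ⟨x, b⟩
    rw [hmem C hC x b, hmem C' hC' x b, h]
  have hle : F.card ≤ T.card := Finset.card_le_card_of_injOn Φ hmaps hinj
  -- count the complement B
  have hBcard : (Finset.univ.filter (fun f : V → Option Bool => ¬ ∃ x, f x = some (σ x))).card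
      = 2 ^ n := by
    set B := Finset.univ.filter (fun f : V → Option Bool => ¬ ∃ x, f x = some (σ x)) with hB
    set Ψ : (V → Bool) → (V → Option Bool) := fun b x => if b x then some (!σ x) else none with hΨ
    have himg : B = Finset.image Ψ Finset.univ := by
      ext f
      simp only [hB, Finset.mem_filter, Finset.mem_univ, true_and, Finset.mem_image]
      constructor
      · intro hf
        push_neg at hf
        refine ⟨fun x => (f x).isSome, funext fun x => ?_⟩
        have key : ∀ (o : Option Bool) (c : Bool), o ≠ some c →
            (if o.isSome then some (!c) else none) = o := by
          rintro (_ | b) c h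
          · simp
          · cases b <;> cases c <;> simp at h ⊢
        simpa only [hΨ] using key (f x) (σ x) (hf x)
      · rintro ⟨b, rfl⟩ ⟨x, hx⟩
        simp only [hΨ] at hx
        split_ifs at hx with h <;> simp at hx
    have hΨinj : Function.Injective Ψ := by
      intro b b' h
      funext x
      have := congrFun h x
      simp only [hΨ] at this
      by_cases hb : b x <;> by_cases hb' : b' x <;> simp [hb, hb'] at this ⊢
    rw [himg, Finset.card_image_of_injective _ hΨinj, Finset.card_univ, Fintype.card_fun, hn,
      Fintype.card_bool]
  have hTcard : T.card = 3 ^ n - 2 ^ n := by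
    have hsum : T.card + 2 ^ n = 3 ^ n := by
      rw [← hBcard, hT]
      rw [Finset.card_filter_add_card_filter_not, Finset.card_univ, Fintype.card_fun, hn,
        Fintype.card_option, Fintype.card_bool]
    exact Nat.eq_sub_of_add_eq hsum
  rw [hTcard] at hle
  exact absurd hle (not_le.mpr hcard)
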